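/- Let (X, ω) be a real symplectic Banach space and F a closed subspace of X. Then the restriction of ω to F × F makes F a symplectic space if and only if X = F ⊕ F^ω, where F^ω = {x ∈ X : ω(x,y) = 0 for all y ∈ F} is the symplectic orthogonal of F. -/

import Mathlib

/-- The symplectic orthogonal of a subspace. -/
def sympOrth {X : Type*} [NormedAddCommGroup X] [NormedSpace ℝ X]
    (ω : X →L[ℝ] X →L[ℝ] ℝ) (F : Submodule ℝ X) : Submodule ℝ X where
  carrier := {x | ∀ y ∈ F, ω x y = 0}
  add_mem' := by
    intro a b ha hb y hy
    simp [map_add, ContinuousLinearMap.add_apply, ha y hy, hb y hy]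
  zero_mem' := by intro y hy; simp
  smul_mem' := by
    intro c a ha y hy
    simp [map_smul, ContinuousLinearMap.smul_apply, ha y hy]

lemma sympOrth_mem {X : Type*} [NormedAddCommGroup X] [NormedSpace ℝ X]
    (ω : X →L[ℝ] X →L[ℝ] ℝ) (F : Submodule ℝ X) (x : X) :
    x ∈ sympOrth ω F ↔ ∀ y ∈ F, ω x y = 0 := Iff.rfl

lemma sympOrth_isClosed {X : Type*} [NormedAddCommGroup X] [NormedSpace ℝ X]
    (ω : X →L[ℝ] X →L[ℝ] ℝ) (F : Submodule ℝ X) :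
    IsClosed ((sympOrth ω F : Submodule ℝ X) : Set X) := by
  have : ((sympOrth ω F : Submodule ℝ X) : Set X) =
      ⋂ y ∈ (F : Set X), {x : X | ω x y = 0} := by
    ext x; simp [sympOrth_mem]
  rw [this]
  refine isClosed_biInter fun y _ => ?_
  have : Continuous fun x : X => ω x y :=
    (ContinuousLinearMap.apply ℝ ℝ y).continuous.comp ω.continuous
  exact isClosed_eq this continuous_const

/-- A closed subspace F of a symplectic Banach space (X,ω) is symplectic
for the restricted form iff X = F ⊕ F^ω. -/
theorem stmt3 {X : Type*} [NormedAddCommGroup X] [NormedSpace ℝ X] [CompleteSpace X]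
    (ω : X →L[ℝ] X →L[ℝ] ℝ) (halt : ∀ x y, ω x y = -ω y x)
    (hbij : Function.Bijective ω)
    (F : Submodule ℝ X) (hF : IsClosed (F : Set X)) :
    Function.Bijective (fun f : F => (ω (f : X)).comp F.subtypeL) ↔
      IsCompl F (sympOrth ω F) := by
  constructor
  · rintro ⟨hinj, hsurj⟩
    constructor
    · -- disjoint
      rw [Submodule.disjoint_def]
      intro x hxF hxO
      have h0 : (fun f : F => (ω (f : X)).comp F.subtypeL) ⟨x, hxF⟩ =
          (fun f : F => (ω (f : X)).comp F.subtypeL) (0 : F) := by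
        ext y
        simp [hxO y y.2]
      have := hinj h0
      simpa using congrArg (Subtype.val) this
    · -- codisjoint
      rw [codisjoint_iff, eq_top_iff]
      intro x _
      obtain ⟨f, hf⟩ := hsurj ((ω x).comp F.subtypeL)
      have hfy : ∀ y ∈ F, ω (f : X) y = ω x y := by
        intro y hy
        have := DFunLike.congr_fun hf ⟨y, hy⟩
        simpa using this
      have hmem : x - (f : X) ∈ sympOrth ω F := by
        intro y hy
        simp [map_sub, ContinuousLinearMap.sub_apply, hfy y hy]
      have : x = (f : X) + (x - (f : X)) := by abel
      rw [this]
      exact Submodule.add_mem_sup f.2 hmem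
  · intro hcompl
    constructor
    · -- injective
      intro a b hab
      have hmem : (a : X) - (b : X) ∈ sympOrth ω F := by
        intro y hy
        have := DFunLike.congr_fun hab ⟨y, hy⟩
        simp only [ContinuousLinearMap.comp_apply, Submodule.subtypeL_apply] at this
        simp [map_sub, ContinuousLinearMap.sub_apply, this]
      have hF' : (a : X) - (b : X) ∈ F := sub_mem a.2 b.2
      have := Submodule.disjoint_def.mp hcompl.disjoint _ hF' hmem
      ext
      exact sub_eq_zero.mp this
    · -- surjective
      intro g
      -- continuous projection onto F
      obtain ⟨π, hπ⟩ : F.ClosedComplemented :=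
        Submodule.ClosedComplemented.of_isCompl_isClosed hcompl hF (sympOrth_isClosed ω F)
      obtain ⟨x, hx⟩ := hbij.2 (g.comp π)
      -- decompose x = f + h
      obtain ⟨f, h, hfF, hhO, hfh⟩ := Submodule.codisjoint_iff_exists_add_eq.mp
        hcompl.codisjoint x
      refine ⟨⟨f, hfF⟩, ?_⟩
      ext y
      have hωx : ω x (y : X) = g y := by
        rw [hx]
        simp [hπ y]
      have hh : ω h (y : X) = 0 := hhO y y.2
      have : ω f (y : X) = ω x (y : X) - ω h (y : X) := by
        rw [← hfh]
        simp [map_add, ContinuousLinearMap.add_apply]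
      simp only [ContinuousLinearMap.comp_apply, Submodule.subtypeL_apply]
      rw [this, hωx, hh, sub_zero]
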